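/- Let Λ be a finite-dimensional algebra and S, T bricks in mod Λ with Hom(T, S) = 0. For a module E, the Hall number counting submodules T' ⊆ E with T' ≅ T and E/T' ≅ S equals 1 if there exists a short exact sequence 0 → T → E → S → 0, and equals 0 otherwise. -/
import Mathlib


/-- A brick: a nonzero module whose endomorphism ring is a division ring, i.e. every
nonzero endomorphism is invertible. -/
def IsBrickMod (Λ : Type) [Ring Λ] (M : Type) [AddCommGroup M] [Module Λ M] : Prop :=
  Nontrivial M ∧ ∀ f : M →ₗ[Λ] M, f ≠ 0 → Function.Bijective f

/-- Let `Λ` be a finite-dimensional algebra and `S`, `T` bricks with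
`Hom(T, S) = 0`. For a module `E`, the Hall number counting submodules `T' ⊆ E` with
`T' ≅ T` and `E/T' ≅ S` equals `1` if there is a short exact sequence
`0 → T → E → S → 0`, and equals `0` otherwise. -/
theorem stmt4 {K : Type} [Field K] {Λ : Type} [Ring Λ] [Algebra K Λ] [FiniteDimensional K Λ]
    (S T E : Type) [AddCommGroup S] [Module Λ S] [AddCommGroup T] [Module Λ T]
    [AddCommGroup E] [Module Λ E]
    [Module.Finite Λ S] [Module.Finite Λ T] [Module.Finite Λ E]
    (hS : IsBrickMod Λ S) (hT : IsBrickMod Λ T)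
    (hHom : ∀ f : T →ₗ[Λ] S, f = 0) :
    ((∃ (f : T →ₗ[Λ] E) (g : E →ₗ[Λ] S), Function.Injective f ∧ Function.Surjective g ∧
        LinearMap.range f = LinearMap.ker g) →
      {T' : Submodule Λ E | Nonempty (T' ≃ₗ[Λ] T) ∧ Nonempty ((E ⧸ T') ≃ₗ[Λ] S)}.ncard = 1) ∧
    (¬ (∃ (f : T →ₗ[Λ] E) (g : E →ₗ[Λ] S), Function.Injective f ∧ Function.Surjective g ∧
        LinearMap.range f = LinearMap.ker g) →
      {T' : Submodule Λ E | Nonempty (T' ≃ₗ[Λ] T) ∧ Nonempty ((E ⧸ T') ≃ₗ[Λ] S)}.ncard = 0) := by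

  classical
  set X := {T' : Submodule Λ E | Nonempty (T' ≃ₗ[Λ] T) ∧ Nonempty ((E ⧸ T') ≃ₗ[Λ] S)} with hX
  -- any member of X gives a short exact sequence
  have mem_ses : ∀ T' ∈ X, ∃ (f : T →ₗ[Λ] E) (g : E →ₗ[Λ] S), Function.Injective f ∧
      Function.Surjective g ∧ LinearMap.range f = LinearMap.ker g := by
    intro T' hT'
    obtain ⟨⟨e₁⟩, ⟨e₂⟩⟩ := hT'
    refine ⟨T'.subtype ∘ₗ (e₁.symm : T →ₗ[Λ] T'), (e₂ : (E ⧸ T') →ₗ[Λ] S) ∘ₗ T'.mkQ,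
      ?_, ?_, ?_⟩
    · exact T'.injective_subtype.comp e₁.symm.injective
    · exact e₂.surjective.comp T'.mkQ_surjective
    · have h1 : LinearMap.range (T'.subtype ∘ₗ (e₁.symm : T →ₗ[Λ] T')) = T' := by
        rw [LinearMap.range_comp, LinearEquiv.range, Submodule.map_top, Submodule.range_subtype]
      have h2 : LinearMap.ker ((e₂ : (E ⧸ T') →ₗ[Λ] S) ∘ₗ T'.mkQ) = T' := by
        rw [LinearMap.ker_comp, LinearEquiv.ker, Submodule.comap_bot, Submodule.ker_mkQ]
      rw [h1, h2]
  -- any two members of X are equal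
  have uniq : ∀ T₁ ∈ X, ∀ T₂ ∈ X, T₁ ≤ T₂ := by
    intro T₁ h₁ T₂ h₂
    obtain ⟨⟨e₁⟩, _⟩ := h₁
    obtain ⟨_, ⟨e₂⟩⟩ := h₂
    intro x hx
    have key := hHom ((e₂ : (E ⧸ T₂) →ₗ[Λ] S) ∘ₗ T₂.mkQ ∘ₗ T₁.subtype ∘ₗ (e₁.symm : T →ₗ[Λ] T₁))
    have := congrArg (fun f => f (e₁ ⟨x, hx⟩)) key
    simp only [LinearMap.comp_apply, LinearMap.zero_apply, LinearEquiv.coe_coe,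
      LinearEquiv.symm_apply_apply, Submodule.coe_subtype] at this
    have h0 : T₂.mkQ x = 0 := e₂.injective (by simpa using this)
    rwa [Submodule.mkQ_apply, Submodule.Quotient.mk_eq_zero] at h0
  constructor
  · rintro ⟨f, g, hf, hg, hfg⟩
    have hmem : LinearMap.range f ∈ X := by
      refine ⟨⟨(LinearEquiv.ofInjective f hf).symm⟩, ⟨?_⟩⟩
      exact (Submodule.quotEquivOfEq _ _ hfg).trans (g.quotKerEquivOfSurjective hg)
    rw [Set.ncard_eq_one]
    exact ⟨LinearMap.range f, Set.eq_singleton_iff_unique_mem.mpr ⟨hmem,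
      fun T' hT' => le_antisymm (uniq _ hT' _ hmem) (uniq _ hmem _ hT')⟩⟩
  · intro h
    have : X = ∅ := by
      rw [Set.eq_empty_iff_forall_notMem]
      exact fun T' hT' => h (mem_ses T' hT')
    rw [this, Set.ncard_empty]
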